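/- For every integer k ≥ 0 and every parking preference α of length n, all rearrangements (permutations of the entries) of α are k-Naples parking functions if and only if the weakly increasing rearrangement of α is a k-Naples parking function. -/

import Mathlib

/-- The spots a car with preference `p` checks backward: `p-1, p-2, …, max(p-k,1)`. -/
def backCandidates (k p : ℕ) : List ℕ :=
  ((List.range k).map (fun i => p - (i + 1))).filter (fun s => decide (1 ≤ s))

/-- The spots a car with preference `p` checks when driving forward: `p+1, …, n`. -/
def fwdCandidates (n p : ℕ) : List ℕ :=
  List.range' (p + 1) (n - p)

/-- The spot in which a car with preference `p` parks under the `k`-Naples rule on a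
one-way street with `n` spots, given the set `occ` of already occupied spots
(`none` if the car fails to park). -/
def naplesStep (k n : ℕ) (occ : Finset ℕ) (p : ℕ) : Option ℕ :=
  if p ∈ occ then
    match (backCandidates k p).filter (fun s => decide (s ∉ occ)) with
    | s :: _ => some s
    | [] =>
      match (fwdCandidates n p).filter (fun s => decide (s ∉ occ)) with
      | s :: _ => some s
      | [] => none
  else some p

/-- Runs the `k`-Naples parking process starting from occupied set `occ` for cars with
the given list of preferences.  Returns the list of spots in which the successive cars
park, or `none` if some car fails to park. -/
def naplesSpots (k n : ℕ) : Finset ℕ → List ℕ → Option (List ℕ)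
  | _, [] => some []
  | occ, p :: rest =>
    match naplesStep k n occ p with
    | none => none
    | some s => (naplesSpots k n (insert s occ) rest).map (fun l => s :: l)

/-- All cars with the given preferences successfully park, starting from occupied set `occ`. -/
def ParksAllFrom (k n : ℕ) (occ : Finset ℕ) (prefs : List ℕ) : Prop :=
  (naplesSpots k n occ prefs).isSome

/-- A parking preference of length `n`: a list of `n` numbers in `{1, …, n}`. -/
def IsParkingPref (n : ℕ) (prefs : List ℕ) : Prop :=
  prefs.length = n ∧ ∀ p ∈ prefs, 1 ≤ p ∧ p ≤ n

/-- A `k`-Naples parking function of length `n`. -/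
def IsNaplesPF (k n : ℕ) (prefs : List ℕ) : Prop :=
  IsParkingPref n prefs ∧ ParksAllFrom k n ∅ prefs

lemma mem_backCandidates {k p x : ℕ} :
    x ∈ backCandidates k p ↔ 1 ≤ x ∧ p - k ≤ x ∧ x < p := by
  simp only [backCandidates, List.mem_filter, List.mem_map, List.mem_range,
    decide_eq_true_eq]
  constructor
  · rintro ⟨⟨i, hi, rfl⟩, h1⟩; omega
  · rintro ⟨h1, h2, h3⟩; exact ⟨⟨p - x - 1, by omega, by omega⟩, h1⟩

lemma mem_fwdCandidates {n p x : ℕ} (hpn : p ≤ n) :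
    x ∈ fwdCandidates n p ↔ p < x ∧ x ≤ n := by
  simp only [fwdCandidates, List.mem_range']
  constructor
  · rintro ⟨i, hi, rfl⟩; omega
  · rintro ⟨h1, h2⟩; exact ⟨x - (p+1), by omega, by omega⟩

lemma pairwise_back {k p : ℕ} :
    (backCandidates k p).Pairwise (fun a b => b < a) := by
  have h1 : ((List.range k).map (fun i => p - (i + 1))).Pairwise
      (fun a b => b < a ∨ b = 0) := by
    rw [List.pairwise_map]
    exact (List.pairwise_lt_range (n := k)).imp (fun h => by omega)
  refine (h1.filter _).imp_of_mem ?_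
  intro a b _ hb hab
  have := List.of_mem_filter hb
  simp only [decide_eq_true_eq] at this
  omega

lemma pairwise_fwd {n p : ℕ} :
    (fwdCandidates n p).Pairwise (· < ·) :=
  List.pairwise_lt_range'

/-- If the head of the filtered list is `s`, everything "before" `s` fails the filter. -/
lemma filter_head_gen {r : ℕ → ℕ → Prop} (hr : ∀ x, ¬ r x x)
    (hasym : ∀ x y, r x y → ¬ r y x) {l : List ℕ} {q : ℕ → Bool} {s : ℕ} {t : List ℕ}
    (hl : l.Pairwise r) (h : l.filter q = s :: t) :
    q s = true ∧ s ∈ l ∧ ∀ x ∈ l, r x s → q x = false := by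
  induction l generalizing t with
  | nil => simp at h
  | cons a l ih =>
    rw [List.pairwise_cons] at hl
    rw [List.filter_cons] at h
    by_cases hqa : q a = true
    · rw [if_pos hqa] at h
      obtain ⟨rfl, rfl⟩ : a = s ∧ l.filter q = t := by
        constructor <;> [exact (List.cons.injEq .. ▸ h).1; exact (List.cons.injEq .. ▸ h).2]
      refine ⟨hqa, List.mem_cons_self, ?_⟩
      intro x hx hxs
      rcases List.mem_cons.1 hx with rfl | hx
      · exact absurd hxs (hr x)
      · exact absurd hxs (hasym _ _ (hl.1 x hx))
    · rw [if_neg hqa] at h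
      obtain ⟨h1, h2, h3⟩ := ih hl.2 h
      refine ⟨h1, List.mem_cons_of_mem _ h2, ?_⟩
      intro x hx hxs
      rcases List.mem_cons.1 hx with rfl | hx
      · simpa using hqa
      · exact h3 x hx hxs

lemma filter_head_gen' {r : ℕ → ℕ → Prop} {l : List ℕ} {q : ℕ → Bool} {s : ℕ}
    (hl : l.Pairwise r) (hs : s ∈ l) (hq : q s = true)
    (hocc : ∀ x ∈ l, r x s → q x = false) :
    ∃ t, l.filter q = s :: t := by
  induction l with
  | nil => simp at hs
  | cons a l ih =>
    rw [List.pairwise_cons] at hl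
    rw [List.filter_cons]
    rcases List.mem_cons.1 hs with rfl | hs'
    · rw [if_pos hq]; exact ⟨_, rfl⟩
    · have hqa : q a = false := hocc a (List.mem_cons_self) (hl.1 s hs')
      rw [if_neg (by simp [hqa])]
      exact ih hl.2 hs' (fun x hx hxs => hocc x (List.mem_cons_of_mem _ hx) hxs)

def StepSpec (k n : ℕ) (D : Finset ℕ) (p s : ℕ) : Prop :=
  s ∉ D ∧
    (s = p ∨
     (1 ≤ s ∧ p - k ≤ s ∧ s < p ∧ p ∈ D ∧ ∀ x, s < x → x < p → x ∈ D) ∨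
     (p < s ∧ s ≤ n ∧ (∀ x, 1 ≤ x → p - k ≤ x → x ≤ p → x ∈ D) ∧
       ∀ x, p < x → x < s → x ∈ D))

lemma naplesStep_eq_some_iff {k n p s : ℕ} {D : Finset ℕ} (hp1 : 1 ≤ p) (hpn : p ≤ n) :
    naplesStep k n D p = some s ↔ StepSpec k n D p s := by
  set q : ℕ → Bool := fun x => decide (x ∉ D) with hq
  have hqt : ∀ x, q x = true ↔ x ∉ D := by intro x; simp [hq]
  have hqf : ∀ x, q x = false ↔ x ∈ D := by
    intro x; simp [hq]
  constructor
  · intro h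
    unfold naplesStep at h
    by_cases hpD : p ∈ D
    · rw [if_pos hpD] at h
      rcases hb : (backCandidates k p).filter q with _ | ⟨s', tb⟩
      · rw [hb] at h
        rcases hf : (fwdCandidates n p).filter q with _ | ⟨s'', tf⟩
        · rw [hf] at h; simp at h
        · rw [hf] at h
          obtain rfl : s'' = s := by simpa using h
          obtain ⟨h1, h2, h3⟩ := filter_head_gen (r := (· < ·))
            (fun x => lt_irrefl x) (fun x y => Nat.lt_asymm) pairwise_fwd hf
          rw [mem_fwdCandidates hpn] at h2
          refine ⟨(hqt _).1 h1, Or.inr (Or.inr ⟨h2.1, h2.2, ?_, ?_⟩)⟩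
          · intro x hx1 hxk hxp
            rcases Nat.lt_or_ge x p with hlt | hge
            · have := List.filter_eq_nil_iff.1 hb x
                (mem_backCandidates.2 ⟨hx1, hxk, hlt⟩)
              rw [← hqf]; simpa using this
            · have : x = p := le_antisymm hxp hge
              exact this ▸ hpD
          · intro x hx1 hx2
            exact (hqf _).1 (h3 x ((mem_fwdCandidates hpn).2 ⟨hx1, by omega⟩) hx2)
      · rw [hb] at h
        obtain rfl : s' = s := by simpa using h
        obtain ⟨h1, h2, h3⟩ := filter_head_gen (r := fun a b => b < a)
          (fun x => lt_irrefl x) (fun x y h h' => Nat.lt_asymm h' h) pairwise_back hb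
        rw [mem_backCandidates] at h2
        refine ⟨(hqt _).1 h1, Or.inr (Or.inl ⟨h2.1, h2.2.1, h2.2.2, hpD, ?_⟩)⟩
        intro x hx1 hx2
        exact (hqf _).1 (h3 x (mem_backCandidates.2 ⟨by omega, by omega, hx2⟩) hx1)
    · rw [if_neg hpD] at h
      obtain rfl : p = s := by simpa using h
      exact ⟨hpD, Or.inl rfl⟩
  · rintro ⟨hsD, hcase⟩
    unfold naplesStep
    rcases hcase with rfl | ⟨h1, h2, h3, hpD, hfill⟩ | ⟨h1, h2, hfill1, hfill2⟩
    · rw [if_neg hsD]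
    · rw [if_pos hpD]
      obtain ⟨t, ht⟩ := filter_head_gen' (r := fun a b => b < a) pairwise_back
        (mem_backCandidates.2 ⟨h1, h2, h3⟩) ((hqt _).2 hsD)
        (fun x hx hxs => (hqf _).2
          (hfill x hxs (mem_backCandidates.1 hx).2.2))
      rw [ht]
    · have hpD : p ∈ D := hfill1 p hp1 (by omega) le_rfl
      rw [if_pos hpD]
      have hb : (backCandidates k p).filter q = [] := by
        rw [List.filter_eq_nil_iff]
        intro x hx
        rw [mem_backCandidates] at hx
        simp only [hq, decide_eq_true_eq, not_not]
        exact hfill1 x hx.1 hx.2.1 (by omega)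
      rw [hb]
      obtain ⟨t, ht⟩ := filter_head_gen' (r := (· < ·)) pairwise_fwd
        ((mem_fwdCandidates hpn).2 ⟨h1, h2⟩) ((hqt _).2 hsD)
        (fun x hx hxs => (hqf _).2 (hfill2 x ((mem_fwdCandidates hpn).1 hx).1 hxs))
      rw [ht]

lemma naplesStep_eq_none_iff {k n p : ℕ} {D : Finset ℕ} (hp1 : 1 ≤ p) (hpn : p ≤ n) :
    naplesStep k n D p = none ↔ ∀ x, 1 ≤ x → p - k ≤ x → x ≤ n → x ∈ D := by
  set q : ℕ → Bool := fun x => decide (x ∉ D) with hq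
  constructor
  · intro h
    unfold naplesStep at h
    by_cases hpD : p ∈ D
    · rw [if_pos hpD] at h
      rcases hb : (backCandidates k p).filter q with _ | ⟨s', tb⟩
      · rw [hb] at h
        rcases hf : (fwdCandidates n p).filter q with _ | ⟨s'', tf⟩
        · intro x hx1 hxk hxn
          rcases Nat.lt_trichotomy x p with hlt | rfl | hgt
          · have := List.filter_eq_nil_iff.1 hb x
              (mem_backCandidates.2 ⟨hx1, hxk, hlt⟩)
            simpa [hq] using this
          · exact hpD
          · have := List.filter_eq_nil_iff.1 hf x
              ((mem_fwdCandidates hpn).2 ⟨hgt, hxn⟩)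
            simpa [hq] using this
        · rw [hf] at h; simp at h
      · rw [hb] at h; simp at h
    · rw [if_neg hpD] at h; simp at h
  · intro hfill
    unfold naplesStep
    rw [if_pos (hfill p hp1 (by omega) hpn)]
    have hb : (backCandidates k p).filter q = [] := by
      rw [List.filter_eq_nil_iff]
      intro x hx
      rw [mem_backCandidates] at hx
      simp only [hq, decide_eq_true_eq, not_not]
      exact hfill x hx.1 hx.2.1 (by omega)
    have hf : (fwdCandidates n p).filter q = [] := by
      rw [List.filter_eq_nil_iff]
      intro x hx
      rw [mem_fwdCandidates hpn] at hx
      simp only [hq, decide_eq_true_eq, not_not]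
      exact hfill x (by omega) (by omega) hx.2
    rw [hb, hf]

lemma StepSpec.bounds {k n p s : ℕ} {D : Finset ℕ} (hp1 : 1 ≤ p) (hpn : p ≤ n)
    (h : StepSpec k n D p s) : 1 ≤ s ∧ p - k ≤ s ∧ s ≤ n ∧ s ∉ D := by
  obtain ⟨hsD, h | h | h⟩ := h
  · subst h; exact ⟨hp1, by omega, hpn, hsD⟩
  · exact ⟨h.1, h.2.1, by omega, hsD⟩
  · exact ⟨by omega, by omega, h.2.1, hsD⟩

open Finset in
/-- Number of occupied spots `≥ c`. -/
def cnt (c : ℕ) (D : Finset ℕ) : ℕ := (D.filter (fun x => c ≤ x)).card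

/-- `B` is dominated (spot-wise below) by `A`. -/
def Dom (B A : Finset ℕ) : Prop := B.card = A.card ∧ ∀ c, cnt c B ≤ cnt c A

lemma cnt_insert {c x : ℕ} {D : Finset ℕ} (h : x ∉ D) :
    cnt c (insert x D) = cnt c D + (if c ≤ x then 1 else 0) := by
  unfold cnt
  rw [Finset.filter_insert]
  split
  · rw [Finset.card_insert_of_notMem (fun hx => h (Finset.mem_of_mem_filter _ hx))]
  · rw [Nat.add_zero]

lemma cnt_split {c p : ℕ} (D : Finset ℕ) (h : c ≤ p + 1) :
    cnt c D = (D.filter (fun x => c ≤ x ∧ x ≤ p)).card + cnt (p + 1) D := by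
  unfold cnt
  have hu : D.filter (fun x => c ≤ x) =
      D.filter (fun x => c ≤ x ∧ x ≤ p) ∪ D.filter (fun x => p + 1 ≤ x) := by
    ext x
    simp only [Finset.mem_filter, Finset.mem_union]
    constructor
    · rintro ⟨hD, hc⟩
      rcases le_or_gt x p with hp' | hp'
      · exact Or.inl ⟨hD, hc, hp'⟩
      · exact Or.inr ⟨hD, hp'⟩
    · rintro (⟨hD, hc, _⟩ | ⟨hD, hp'⟩) <;> exact ⟨hD, by omega⟩
  rw [hu, Finset.card_union_of_disjoint ?_]
  rw [Finset.disjoint_left]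
  intro a ha hb
  simp only [Finset.mem_filter] at ha hb
  omega

lemma dom_interval {n c : ℕ} {B A : Finset ℕ} (hA : A ⊆ Finset.Icc 1 n)
    (hdom : ∀ c, cnt c B ≤ cnt c A) (hsub : Finset.Icc c n ⊆ B) :
    Finset.Icc c n ⊆ A := by
  have h1 : Finset.Icc c n ⊆ B.filter (fun x => c ≤ x) := by
    intro x hx
    rw [Finset.mem_Icc] at hx
    exact Finset.mem_filter.2 ⟨hsub (Finset.mem_Icc.2 hx), hx.1⟩
  have h2 : A.filter (fun x => c ≤ x) ⊆ Finset.Icc c n := by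
    intro x hx
    rw [Finset.mem_filter] at hx
    have := Finset.mem_Icc.1 (hA hx.1)
    exact Finset.mem_Icc.2 ⟨hx.2, this.2⟩
  have h3 : A.filter (fun x => c ≤ x) = Finset.Icc c n :=
    Finset.eq_of_subset_of_card_le h2
      (le_trans (Finset.card_le_card h1) (hdom c))
  exact h3 ▸ Finset.filter_subset _ _

lemma dom_insert_aux {k n p s t c : ℕ} {B A : Finset ℕ}
    (hdom : Dom B A) (hct' : t < c) (hcs : c ≤ s) (hsp : s ≤ p) (hsB : s ∉ B)
    (ht : StepSpec k n A p t) : cnt c B < cnt c A := by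
  obtain ⟨htA, rfl | ⟨_, _, htp, hpA, hfillA⟩ | ⟨hpt, _⟩⟩ := ht
  · omega
  · have hAi : Finset.Icc c p ⊆ A := by
      intro x hx
      rw [Finset.mem_Icc] at hx
      rcases eq_or_lt_of_le hx.2 with rfl | h
      · exact hpA
      · exact hfillA x (by omega) h
    have e1 := cnt_split (c := c) (p := p) B (by omega)
    have e2 := cnt_split (c := c) (p := p) A (by omega)
    have h1 : Finset.Icc c p ⊆ A.filter (fun x => c ≤ x ∧ x ≤ p) := by
      intro x hx
      exact Finset.mem_filter.2 ⟨hAi hx, Finset.mem_Icc.1 hx⟩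
    have h2 : B.filter (fun x => c ≤ x ∧ x ≤ p) ⊆ (Finset.Icc c p).erase s := by
      intro x hx
      rw [Finset.mem_filter] at hx
      refine Finset.mem_erase.2 ⟨?_, Finset.mem_Icc.2 hx.2⟩
      rintro rfl; exact hsB hx.1
    have c1 := Finset.card_le_card h1
    have c2 := Finset.card_le_card h2
    rw [Finset.card_erase_of_mem (Finset.mem_Icc.2 ⟨hcs, hsp⟩)] at c2
    rw [Nat.card_Icc] at c1 c2
    have hd := hdom.2 (p + 1)
    omega
  · omega

lemma dom_insert_spec {k n p s t : ℕ} {B A : Finset ℕ}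
    (hdom : Dom B A)
    (hp1 : 1 ≤ p) (hpn : p ≤ n)
    (hs : StepSpec k n B p s) (ht : StepSpec k n A p t) :
    Dom (insert s B) (insert t A) := by
  obtain ⟨hs1, hsk, hsn, hsB⟩ := hs.bounds hp1 hpn
  obtain ⟨ht1, htk, htn, htA⟩ := ht.bounds hp1 hpn
  constructor
  · rw [Finset.card_insert_of_notMem hsB, Finset.card_insert_of_notMem htA, hdom.1]
  intro c
  rw [cnt_insert hsB, cnt_insert htA]
  by_cases hcs : c ≤ s
  · by_cases hct : c ≤ t
    · simp only [if_pos hcs, if_pos hct]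
      exact Nat.add_le_add_right (hdom.2 c) 1
    · -- hard case : t < c ≤ s, must show cnt c B < cnt c A
      simp only [if_pos hcs, if_neg hct]
      have hct' : t < c := by omega
      have key : cnt c B < cnt c A := by
        rcases hs.2 with rfl | ⟨_, _, hsp, _, _⟩ | ⟨hps, _, hfill1, hfill2⟩
        · exact dom_insert_aux hdom hct' hcs le_rfl hsB ht
        · exact dom_insert_aux hdom hct' hcs (le_of_lt hsp) hsB ht
        · -- s > p : use threshold t
          have hBfill : ∀ x, 1 ≤ x → p - k ≤ x → x < s → x ∈ B := by
            intro x h1 h2 h3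
            rcases le_or_gt x p with h4 | h4
            · exact hfill1 x h1 h2 h4
            · exact hfill2 x h4 h3
          have hBi : Finset.Icc t (c - 1) ⊆ B := by
            intro x hx
            rw [Finset.mem_Icc] at hx
            exact hBfill x (by omega) (by omega) (by omega)
          have e1 : cnt t B = (B.filter (fun x => t ≤ x ∧ x ≤ c - 1)).card + cnt c B := by
            have := cnt_split (c := t) (p := c - 1) B (by omega)
            rwa [show c - 1 + 1 = c by omega] at this
          have e2 : cnt t A = (A.filter (fun x => t ≤ x ∧ x ≤ c - 1)).card + cnt c A := by
            have := cnt_split (c := t) (p := c - 1) A (by omega)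
            rwa [show c - 1 + 1 = c by omega] at this
          have h1 : Finset.Icc t (c - 1) ⊆ B.filter (fun x => t ≤ x ∧ x ≤ c - 1) := by
            intro x hx
            have hx' := Finset.mem_Icc.1 hx
            exact Finset.mem_filter.2 ⟨hBi hx, hx'⟩
          have h2 : A.filter (fun x => t ≤ x ∧ x ≤ c - 1) ⊆ (Finset.Icc t (c - 1)).erase t := by
            intro x hx
            rw [Finset.mem_filter] at hx
            refine Finset.mem_erase.2 ⟨?_, Finset.mem_Icc.2 hx.2⟩
            rintro rfl; exact htA hx.1
          have c1 := Finset.card_le_card h1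
          have c2 := Finset.card_le_card h2
          rw [Finset.card_erase_of_mem (Finset.mem_Icc.2 ⟨le_rfl, by omega⟩)] at c2
          rw [Nat.card_Icc] at c1 c2
          have hd := hdom.2 t
          omega
      omega
  · simp only [if_neg hcs]
    have := hdom.2 c
    split <;> omega

lemma naplesStep_none_of_fill {k n p : ℕ} {D : Finset ℕ} (hp1 : 1 ≤ p) (hpn : p ≤ n)
    (h : Finset.Icc (max (p - k) 1) n ⊆ D) : naplesStep k n D p = none := by
  rw [naplesStep_eq_none_iff hp1 hpn]
  intro x hx1 hxk hxn
  exact h (Finset.mem_Icc.2 ⟨by omega, hxn⟩)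

lemma fill_of_naplesStep_none {k n p : ℕ} {D : Finset ℕ} (hp1 : 1 ≤ p) (hpn : p ≤ n)
    (h : naplesStep k n D p = none) : Finset.Icc (max (p - k) 1) n ⊆ D := by
  rw [naplesStep_eq_none_iff hp1 hpn] at h
  intro x hx
  rw [Finset.mem_Icc] at hx
  exact h x (by omega) (by omega) hx.2

/-- Existence of a step on the dominated side. -/
lemma step_some_of_dom {k n p t : ℕ} {B A : Finset ℕ}
    (hA : A ⊆ Finset.Icc 1 n) (hdom : Dom B A) (hp1 : 1 ≤ p) (hpn : p ≤ n)
    (ht : naplesStep k n A p = some t) :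
    ∃ s, naplesStep k n B p = some s := by
  rcases hB' : naplesStep k n B p with _ | s
  · exfalso
    have hfillB := fill_of_naplesStep_none hp1 hpn hB'
    have hfillA := dom_interval hA hdom.2 hfillB
    rw [naplesStep_none_of_fill hp1 hpn hfillA] at ht
    cases ht
  · exact ⟨s, rfl⟩

/-- Inserting a spot different from the parking result does not change the result. -/
lemma naplesStep_insert {k n p u v : ℕ} {D : Finset ℕ} (hp1 : 1 ≤ p) (hpn : p ≤ n)
    (h : naplesStep k n D p = some u) (hv : v ≠ u) :
    naplesStep k n (insert v D) p = some u := by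
  rw [naplesStep_eq_some_iff hp1 hpn] at h ⊢
  obtain ⟨huD, hcase⟩ := h
  refine ⟨by simp [hv.symm, huD], ?_⟩
  rcases hcase with rfl | ⟨h1, h2, h3, h4, h5⟩ | ⟨h1, h2, h3, h4⟩
  · exact Or.inl rfl
  · exact Or.inr (Or.inl ⟨h1, h2, h3, Finset.mem_insert_of_mem h4,
      fun x hx hx' => Finset.mem_insert_of_mem (h5 x hx hx')⟩)
  · exact Or.inr (Or.inr ⟨h1, h2,
      fun x a b c => Finset.mem_insert_of_mem (h3 x a b c),
      fun x a b => Finset.mem_insert_of_mem (h4 x a b)⟩)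

/-- Monotonicity: with the same occupied set, a smaller preference parks no later. -/
lemma naplesStep_mono {k n a b t : ℕ} {D : Finset ℕ}
    (ha1 : 1 ≤ a) (hab : a ≤ b) (hbn : b ≤ n)
    (ht : naplesStep k n D b = some t) :
    ∃ s, naplesStep k n D a = some s ∧ s ≤ t := by
  rw [naplesStep_eq_some_iff (by omega) hbn] at ht
  obtain ⟨htb1, htbk, htbn, htD⟩ := ht.bounds (by omega) hbn
  have hsome : ∃ s, naplesStep k n D a = some s := by
    rcases hD : naplesStep k n D a with _ | s
    · exfalso
      rw [naplesStep_eq_none_iff ha1 (by omega)] at hD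
      exact htD (hD t htb1 (by omega) htbn)
    · exact ⟨s, rfl⟩
  obtain ⟨s, hs⟩ := hsome
  refine ⟨s, hs, ?_⟩
  rw [naplesStep_eq_some_iff ha1 (by omega)] at hs
  by_contra hst
  push_neg at hst  -- t < s
  obtain ⟨hsD, hscase⟩ := hs
  obtain ⟨htD', htcase⟩ := ht
  rcases hscase with rfl | ⟨hs1, hsk, hsa, haD, hfillA⟩ | ⟨has, hsn, hfill1, hfill2⟩
  · -- s = a, a ∉ D, t < a ≤ b
    rcases htcase with rfl | ⟨_, _, htb, hbD, hfillB⟩ | ⟨hbt, _⟩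
    · omega
    · rcases eq_or_lt_of_le hab with rfl | hab'
      · exact hsD hbD
      · exact hsD (hfillB s hst hab')
    · omega
  · -- s < a
    rcases htcase with rfl | ⟨_, _, htb, hbD, hfillB⟩ | ⟨hbt, _⟩
    · omega
    · exact hsD (hfillB s hst (by omega))
    · omega
  · -- a < s
    have : ∀ x, 1 ≤ x → a - k ≤ x → x < s → x ∈ D := by
      intro x h1 h2 h3
      rcases le_or_gt x a with h4 | h4
      · exact hfill1 x h1 h2 h4
      · exact hfill2 x h4 h3
    exact htD (this t htb1 (by omega) hst)

lemma naplesSpots_cons_isSome {k n p : ℕ} {C : Finset ℕ} {L : List ℕ} :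
    (naplesSpots k n C (p :: L)).isSome = true ↔
      ∃ s, naplesStep k n C p = some s ∧ (naplesSpots k n (insert s C) L).isSome = true := by
  cases h : naplesStep k n C p with
  | none => simp [naplesSpots, h]
  | some s => simp [naplesSpots, h, Option.isSome_map]

lemma insert_subset_Icc {n s : ℕ} {C : Finset ℕ} (hC : C ⊆ Finset.Icc 1 n)
    (h1 : 1 ≤ s) (h2 : s ≤ n) : insert s C ⊆ Finset.Icc 1 n :=
  Finset.insert_subset_iff.2 ⟨Finset.mem_Icc.2 ⟨h1, h2⟩, hC⟩

/-- Success transfers from a dominating occupied set to a dominated one. -/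
lemma run_dom {k n : ℕ} : ∀ (L : List ℕ) (B A : Finset ℕ),
    B ⊆ Finset.Icc 1 n → A ⊆ Finset.Icc 1 n → Dom B A →
    (∀ p ∈ L, 1 ≤ p ∧ p ≤ n) →
    (naplesSpots k n A L).isSome = true → (naplesSpots k n B L).isSome = true := by
  intro L
  induction L with
  | nil => intro B A _ _ _ _ _; simp [naplesSpots]
  | cons p L ih =>
    intro B A hB hA hdom hbd hsucc
    obtain ⟨t, ht, hrest⟩ := naplesSpots_cons_isSome.1 hsucc
    have hp1 : 1 ≤ p := (hbd p (List.mem_cons_self)).1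
    have hpn : p ≤ n := (hbd p (List.mem_cons_self)).2
    obtain ⟨s, hs⟩ := step_some_of_dom hA hdom hp1 hpn ht
    have hsspec := (naplesStep_eq_some_iff hp1 hpn).1 hs
    have htspec := (naplesStep_eq_some_iff hp1 hpn).1 ht
    obtain ⟨hs1, _, hsn, _⟩ := hsspec.bounds hp1 hpn
    obtain ⟨ht1, _, htn, _⟩ := htspec.bounds hp1 hpn
    refine naplesSpots_cons_isSome.2 ⟨s, hs, ?_⟩
    exact ih (insert s B) (insert t A) (insert_subset_Icc hB hs1 hsn)
      (insert_subset_Icc hA ht1 htn)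
      (dom_insert_spec hdom hp1 hpn hsspec htspec)
      (fun x hx => hbd x (List.mem_cons_of_mem _ hx)) hrest

lemma dom_refl (B : Finset ℕ) : Dom B B := ⟨rfl, fun _ => le_rfl⟩

/-- The swap lemma: moving the larger of two adjacent preferences first preserves success. -/
lemma swap_head {k n a b : ℕ} {C : Finset ℕ} {R : List ℕ}
    (hC : C ⊆ Finset.Icc 1 n) (ha1 : 1 ≤ a) (hab : a ≤ b) (hbn : b ≤ n)
    (hR : ∀ p ∈ R, 1 ≤ p ∧ p ≤ n)
    (h : (naplesSpots k n C (a :: b :: R)).isSome = true) :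
    (naplesSpots k n C (b :: a :: R)).isSome = true := by
  have han : a ≤ n := le_trans hab hbn
  have hb1 : 1 ≤ b := le_trans ha1 hab
  obtain ⟨s1, hs1, h'⟩ := naplesSpots_cons_isSome.1 h
  obtain ⟨s2, hs2, hrest⟩ := naplesSpots_cons_isSome.1 h'
  have hs1spec := (naplesStep_eq_some_iff ha1 han).1 hs1
  obtain ⟨hs11, _, hs1n, hs1C⟩ := hs1spec.bounds ha1 han
  -- the first car of the swapped run parks
  have ht1some : ∃ t1, naplesStep k n C b = some t1 := by
    rcases hb' : naplesStep k n C b with _ | t1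
    · exfalso
      have hfill := fill_of_naplesStep_none hb1 hbn hb'
      have : naplesStep k n (insert s1 C) b = none :=
        naplesStep_none_of_fill hb1 hbn
          (fun x hx => Finset.mem_insert_of_mem (hfill hx))
      rw [this] at hs2; cases hs2
    · exact ⟨t1, rfl⟩
  obtain ⟨t1, ht1⟩ := ht1some
  have ht1spec := (naplesStep_eq_some_iff hb1 hbn).1 ht1
  obtain ⟨ht11, _, ht1n, ht1C⟩ := ht1spec.bounds hb1 hbn
  by_cases hts : t1 = s1
  · -- same first spot; use monotonicity for the second car
    subst hts
    obtain ⟨t2, ht2, ht2le⟩ := naplesStep_mono ha1 hab hbn hs2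
    have ht2spec := (naplesStep_eq_some_iff ha1 han).1 ht2
    obtain ⟨ht21, _, ht2n, ht2C⟩ := ht2spec.bounds ha1 han
    have hs2spec := (naplesStep_eq_some_iff hb1 hbn).1 hs2
    obtain ⟨hs21, _, hs2n, hs2C⟩ := hs2spec.bounds hb1 hbn
    refine naplesSpots_cons_isSome.2 ⟨t1, ht1, naplesSpots_cons_isSome.2 ⟨t2, ht2, ?_⟩⟩
    refine run_dom R _ _
      (insert_subset_Icc (insert_subset_Icc hC ht11 ht1n) ht21 ht2n)
      (insert_subset_Icc (insert_subset_Icc hC ht11 ht1n) hs21 hs2n) ?_ hR hrest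
    constructor
    · rw [Finset.card_insert_of_notMem ht2C, Finset.card_insert_of_notMem hs2C]
    · intro c
      rw [cnt_insert ht2C, cnt_insert hs2C]
      have := le_refl (cnt c (insert t1 C))
      split <;> split <;> omega
  · -- different first spots: the two runs fill the same two spots
    have h1 : naplesStep k n (insert s1 C) b = some t1 :=
      naplesStep_insert hb1 hbn ht1 (fun h => hts h.symm)
    have ht1s2 : t1 = s2 := by
      rw [h1] at hs2; exact (Option.some.injEq _ _ ▸ hs2)
    have h2 : naplesStep k n (insert t1 C) a = some s1 :=
      naplesStep_insert ha1 han hs1 hts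
    refine naplesSpots_cons_isSome.2 ⟨t1, ht1, naplesSpots_cons_isSome.2 ⟨s1, h2, ?_⟩⟩
    subst ht1s2
    rw [Finset.insert_comm] at hrest
    exact hrest

/-- Pulling any element of a sorted preference list to the front preserves success. -/
lemma pull_front {k n p : ℕ} : ∀ (M : List ℕ) (C : Finset ℕ),
    C ⊆ Finset.Icc 1 n → List.Pairwise (· ≤ ·) M → (∀ x ∈ M, 1 ≤ x ∧ x ≤ n) →
    p ∈ M → (naplesSpots k n C M).isSome = true →
    (naplesSpots k n C (p :: M.erase p)).isSome = true := by
  intro M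
  induction M with
  | nil => intro C _ _ _ hp; simp at hp
  | cons m M ih =>
    intro C hC hsort hbd hp hsucc
    by_cases hmp : m = p
    · subst hmp
      rwa [List.erase_cons_head]
    · have hp' : p ∈ M := by
        rcases List.mem_cons.1 hp with rfl | h
        · exact absurd rfl hmp
        · exact h
      rw [List.pairwise_cons] at hsort
      obtain ⟨s, hs, hrest⟩ := naplesSpots_cons_isSome.1 hsucc
      have hm1 : 1 ≤ m := (hbd m (List.mem_cons_self)).1
      have hmn : m ≤ n := (hbd m (List.mem_cons_self)).2
      have hsspec := (naplesStep_eq_some_iff hm1 hmn).1 hs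
      obtain ⟨hss1, _, hssn, _⟩ := hsspec.bounds hm1 hmn
      have hbd' : ∀ x ∈ M, 1 ≤ x ∧ x ≤ n := fun x hx => hbd x (List.mem_cons_of_mem _ hx)
      have ih' := ih (insert s C) (insert_subset_Icc hC hss1 hssn) hsort.2 hbd' hp' hrest
      have hsucc2 : (naplesSpots k n C (m :: p :: M.erase p)).isSome = true :=
        naplesSpots_cons_isSome.2 ⟨s, hs, ih'⟩
      have hbdrest : ∀ x ∈ M.erase p, 1 ≤ x ∧ x ≤ n :=
        fun x hx => hbd' x (List.mem_of_mem_erase hx)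
      have hswap := swap_head hC hm1 (hsort.1 p hp') (hbd p hp).2 hbdrest hsucc2
      rwa [List.erase_cons_tail (by simp [hmp])]
  -- end

/-- Main lemma: success of the sorted rearrangement implies success of any rearrangement. -/
lemma perm_run {k n : ℕ} : ∀ (L M : List ℕ) (C : Finset ℕ),
    C ⊆ Finset.Icc 1 n → L.Perm M → List.Pairwise (· ≤ ·) M →
    (∀ x ∈ M, 1 ≤ x ∧ x ≤ n) →
    (naplesSpots k n C M).isSome = true → (naplesSpots k n C L).isSome = true := by
  intro L
  induction L with
  | nil => intro M C _ _ _ _ _; simp [naplesSpots]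
  | cons p L ih =>
    intro M C hC hperm hsort hbd hsucc
    have hpM : p ∈ M := hperm.subset (List.mem_cons_self)
    have hpull := pull_front M C hC hsort hbd hpM hsucc
    obtain ⟨s, hs, hrest⟩ := naplesSpots_cons_isSome.1 hpull
    have hp1 : 1 ≤ p := (hbd p hpM).1
    have hpn : p ≤ n := (hbd p hpM).2
    have hsspec := (naplesStep_eq_some_iff hp1 hpn).1 hs
    obtain ⟨hss1, _, hssn, _⟩ := hsspec.bounds hp1 hpn
    refine naplesSpots_cons_isSome.2 ⟨s, hs, ?_⟩
    refine ih (M.erase p) (insert s C) (insert_subset_Icc hC hss1 hssn) ?_ ?_ ?_ hrest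
    · exact (hperm.trans (List.perm_cons_erase hpM)).cons_inv
    · exact hsort.sublist (List.erase_sublist (a := p) (l := M))
    · exact fun x hx => hbd x (List.mem_of_mem_erase hx)


/-- Theorem on rearrangements.
For every `k ≥ 0` and every parking preference `α` of length `n`, all rearrangements of `α`
are `k`-Naples parking functions if and only if the weakly increasing rearrangement of `α`
is a `k`-Naples parking function. -/
theorem statement1 (k n : ℕ) (α : List ℕ) (hα : IsParkingPref n α) :
    (∀ q : List ℕ, q.Perm α → IsNaplesPF k n q) ↔
      (∀ q : List ℕ, q.Perm α → List.Pairwise (· ≤ ·) q → IsNaplesPF k n q) := by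
  constructor
  · intro h q hq _
    exact h q hq
  · intro h q hq
    set M : List ℕ := List.insertionSort (· ≤ ·) α with hM
    have hMperm : M.Perm α := List.perm_insertionSort _ α
    have hMsort : List.Pairwise (· ≤ ·) M := List.pairwise_insertionSort _ α
    have hMbd : ∀ x ∈ M, 1 ≤ x ∧ x ≤ n := fun x hx => hα.2 x (hMperm.subset hx)
    have hMpf := h M hMperm hMsort
    refine ⟨⟨hq.length_eq.trans hα.1, fun p hp => hα.2 p (hq.subset hp)⟩, ?_⟩
    have : (naplesSpots k n ∅ q).isSome = true :=
      perm_run q M ∅ (Finset.empty_subset _) (hq.trans hMperm.symm) hMsort hMbd hMpf.2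
    exact this
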